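/- For any finite simple graph G, Δ(G) − 1 ≤ ∂_s(G) ≤ n(G)·Δ(G)/(Δ(G)+2); equivalently for the upper bound, (Δ(G)+2)·∂_s(G) ≤ n(G)·Δ(G). -/

import Mathlib

open Finset

namespace StrongDifferential

variable {V : Type*} [Fintype V] [DecidableEq V] (G : SimpleGraph V) [DecidableRel G.Adj]

/-- The external neighbourhood `N_e(D)` of a set `D`: vertices outside `D`
with a neighbour in `D`. -/
def extNbhd (D : Finset V) : Finset V :=
  univ.filter fun u => u ∉ D ∧ ∃ v ∈ D, G.Adj u v

/-- The external private neighbourhood `epn(v, D)` of `v` with respect to `D`. -/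
def epn (v : V) (D : Finset V) : Finset V :=
  univ.filter fun u => u ∉ D ∧ G.neighborFinset u ∩ D = {v}

/-- `D_w`: the vertices of `D` having a nonempty external private neighbourhood. -/
def weak (D : Finset V) : Finset V :=
  D.filter fun v => (epn G v D).Nonempty

/-- `D_s = D \ D_w`. -/
def strong (D : Finset V) : Finset V :=
  D \ weak G D

/-- The strong differential `∂ₛ(D) = |N_e(D)| - |D_w|` of a set `D`. -/
def sdiffSet (D : Finset V) : ℤ :=
  (extNbhd G D).card - (weak G D).card

/-- The strong differential `∂ₛ(G) = max {∂ₛ(D) : D ⊆ V(G)}` of the graph `G`. -/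
def sdiff : ℤ :=
  (univ : Finset V).powerset.sup' ⟨∅, empty_mem_powerset _⟩ (sdiffSet G)

/-- The differential `∂(D) = |N_e(D)| - |D|` of a set `D`. -/
def diffSet (D : Finset V) : ℤ :=
  (extNbhd G D).card - D.card

/-- The differential `∂(G) = max {∂(D) : D ⊆ V(G)}` of the graph `G`. -/
def gdiff : ℤ :=
  (univ : Finset V).powerset.sup' ⟨∅, empty_mem_powerset _⟩ (diffSet G)

/-- A dominating set: every vertex outside `D` has a neighbour in `D`. -/
def IsDomSet (D : Finset V) : Prop :=
  ∀ v, v ∉ D → ∃ u ∈ D, G.Adj v u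

/-- The domination number `γ(G)`. -/
noncomputable def gamma : ℕ :=
  sInf {k | ∃ D : Finset V, IsDomSet G D ∧ D.card = k}

/-- A 2-dominating set: every vertex outside `D` has at least two neighbours in `D`. -/
def Is2DomSet (D : Finset V) : Prop :=
  ∀ v, v ∉ D → 2 ≤ (G.neighborFinset v ∩ D).card

/-- The 2-domination number `γ₂(G)`. -/
noncomputable def gamma2 : ℕ :=
  sInf {k | ∃ D : Finset V, Is2DomSet G D ∧ D.card = k}

/-- An Italian dominating function: `f : V → {0,1,2}` such that every
vertex of weight `0` has total weight at least `2` on its neighbourhood. -/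
def IsIDF (f : V → ℕ) : Prop :=
  (∀ v, f v ≤ 2) ∧ ∀ v, f v = 0 → 2 ≤ ∑ u ∈ G.neighborFinset v, f u

/-- The Italian domination number `γ_I(G)`. -/
noncomputable def italian : ℕ :=
  sInf {k | ∃ f : V → ℕ, IsIDF G f ∧ ∑ v, f v = k}

/-- `σ(G)`: the number of vertices adjacent to at least two leaves. -/
def sigmaSupp : ℕ :=
  (univ.filter fun v => 2 ≤ ((G.neighborFinset v).filter fun u => G.degree u = 1).card).card

/-- The independence number `α(G)`. -/
noncomputable def indepNum : ℕ :=
  sSup {k | ∃ S : Finset V, (∀ u ∈ S, ∀ w ∈ S, u ≠ w → ¬ G.Adj u w) ∧ S.card = k}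

/-- The vertex cover number `β(G)`. -/
noncomputable def vcNum : ℕ :=
  sInf {k | ∃ S : Finset V, (∀ u v, G.Adj u v → u ∈ S ∨ v ∈ S) ∧ S.card = k}

/-- A semitotal dominating set: a dominating set in which every vertex is
within distance two of another vertex of the set. -/
def IsSemitotalDomSet (D : Finset V) : Prop :=
  IsDomSet G D ∧ ∀ v ∈ D, ∃ u ∈ D, u ≠ v ∧ (G.Adj v u ∨ ∃ w, G.Adj v w ∧ G.Adj w u)

/-- The semitotal domination number `γ_{t2}(G)`. -/
noncomputable def gammaT2 : ℕ :=
  sInf {k | ∃ D : Finset V, IsSemitotalDomSet G D ∧ D.card = k}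

-- auxiliary lemmas
lemma key_upper (D : Finset V) :
    ((G.maxDegree : ℤ) + 2) * sdiffSet G D ≤ (Fintype.card V : ℤ) * G.maxDegree := by
  classical
  set Δ := G.maxDegree with hΔ
  set N := extNbhd G D with hN
  set W := weak G D with hW
  -- D and N are disjoint
  have hdisj : Disjoint D N := by
    rw [Finset.disjoint_left]
    intro u hu hun
    simp only [hN, extNbhd, mem_filter] at hun
    exact hun.2.1 hu
  have hcard : D.card + N.card ≤ Fintype.card V := by
    rw [← Finset.card_union_of_disjoint hdisj]
    simpa using Finset.card_le_univ (D ∪ N)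
  -- total edge count from N to D
  set c : V → ℕ := fun u => (G.neighborFinset u ∩ D).card with hc
  set T : ℕ := ∑ u ∈ N, c u with hT
  -- upper bound on T
  have hTle : T ≤ D.card * Δ := by
    have h1 : T ≤ ∑ u : V, c u :=
      Finset.sum_le_sum_of_subset (Finset.subset_univ N)
    have h2 : ∑ u : V, c u = ∑ v ∈ D, G.degree v := by
      have : ∀ u : V, c u = ∑ v ∈ D, if G.Adj u v then 1 else 0 := by
        intro u
        have heq : G.neighborFinset u ∩ D = D.filter (fun v => G.Adj u v) := by
          ext x; simp [SimpleGraph.mem_neighborFinset, and_comm]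
        show (G.neighborFinset u ∩ D).card = _
        rw [heq, Finset.card_filter]
      simp_rw [this]
      rw [Finset.sum_comm]
      refine Finset.sum_congr rfl fun v _ => ?_
      rw [← Finset.card_filter, SimpleGraph.degree]
      congr 1
      ext u; simp [SimpleGraph.mem_neighborFinset, G.adj_comm]
    have h3 : ∑ v ∈ D, G.degree v ≤ D.card * Δ := by
      calc ∑ v ∈ D, G.degree v ≤ ∑ _v ∈ D, Δ :=
            Finset.sum_le_sum fun v _ => G.degree_le_maxDegree v
        _ = D.card * Δ := by rw [Finset.sum_const, smul_eq_mul]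
    omega
  -- the private-neighbour set
  set P : Finset V := N.filter (fun u => c u = 1) with hP
  have hlb : 2 * N.card ≤ T + P.card := by
    have : ∀ u ∈ N, 2 ≤ c u + (if c u = 1 then 1 else 0) := by
      intro u hu
      have hc1 : 1 ≤ c u := by
        simp only [hN, extNbhd, mem_filter] at hu
        obtain ⟨-, -, v, hv, hadj⟩ := hu
        have : v ∈ G.neighborFinset u ∩ D := by
          simp [SimpleGraph.mem_neighborFinset, hadj, hv]
        exact Finset.card_pos.mpr ⟨v, this⟩
      by_cases h : c u = 1
      · simp [h]
      · simp only [if_neg h]; omega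
    calc 2 * N.card = ∑ _u ∈ N, 2 := by rw [Finset.sum_const, smul_eq_mul, mul_comm]
      _ ≤ ∑ u ∈ N, (c u + if c u = 1 then 1 else 0) := Finset.sum_le_sum this
      _ = T + P.card := by rw [Finset.sum_add_distrib, hP, Finset.card_filter]
  -- P is covered by the epns of weak vertices
  have hPsub : P ⊆ W.biUnion (fun v => epn G v D) := by
    intro u hu
    simp only [hP, hN, extNbhd, mem_filter, mem_univ, true_and] at hu
    obtain ⟨⟨hud, -⟩, hcu⟩ := hu
    obtain ⟨v, hv⟩ := Finset.card_eq_one.mp hcu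
    have hvD : v ∈ D := by
      have : v ∈ G.neighborFinset u ∩ D := by rw [hv]; exact Finset.mem_singleton_self v
      exact (Finset.mem_inter.mp this).2
    have huepn : u ∈ epn G v D := by
      simp only [epn, mem_filter, mem_univ, true_and]
      exact ⟨hud, hv⟩
    have hvW : v ∈ W := by
      simp only [hW, weak, mem_filter]
      exact ⟨hvD, ⟨u, huepn⟩⟩
    exact Finset.mem_biUnion.mpr ⟨v, hvW, huepn⟩
  have hepncard : ∀ v, (epn G v D).card ≤ Δ := by
    intro v
    have hsub : epn G v D ⊆ G.neighborFinset v := by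
      intro u hu
      simp only [epn, mem_filter, mem_univ, true_and] at hu
      have : v ∈ G.neighborFinset u ∩ D := by rw [hu.2]; exact Finset.mem_singleton_self v
      have := (Finset.mem_inter.mp this).1
      rw [SimpleGraph.mem_neighborFinset] at this ⊢
      exact this.symm
    calc (epn G v D).card ≤ (G.neighborFinset v).card := Finset.card_le_card hsub
      _ = G.degree v := rfl
      _ ≤ Δ := G.degree_le_maxDegree v
  have hPle : P.card ≤ W.card * Δ := by
    calc P.card ≤ (W.biUnion (fun v => epn G v D)).card := Finset.card_le_card hPsub
      _ ≤ ∑ v ∈ W, (epn G v D).card := Finset.card_biUnion_le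
      _ ≤ ∑ _v ∈ W, Δ := Finset.sum_le_sum fun v _ => hepncard v
      _ = W.card * Δ := by rw [Finset.sum_const, smul_eq_mul]
  -- combine: 2 * N.card ≤ D.card * Δ + W.card * Δ
  have hmain : 2 * N.card ≤ D.card * Δ + W.card * Δ := by omega
  -- now in ℤ
  rw [sdiffSet]
  have hmain' : (2 : ℤ) * N.card ≤ (D.card : ℤ) * Δ + (W.card : ℤ) * Δ := by
    exact_mod_cast hmain
  have hcard' : (D.card : ℤ) + N.card ≤ Fintype.card V := by exact_mod_cast hcard
  have hΔ0 : (0 : ℤ) ≤ (Δ : ℤ) := by positivity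
  have hW0 : (0 : ℤ) ≤ (W.card : ℤ) := by positivity
  nlinarith [mul_le_mul_of_nonneg_left hcard' hΔ0]

lemma key_lower :
    (G.maxDegree : ℤ) - 1 ≤ sdiff G := by
  classical
  rcases isEmpty_or_nonempty V with hV | hV
  · have h1 : sdiffSet G (∅ : Finset V) ≤ sdiff G :=
      Finset.le_sup' _ (empty_mem_powerset _)
    have h2 : sdiffSet G (∅ : Finset V) = 0 := by
      simp [sdiffSet, extNbhd, weak]
    have h3 : G.maxDegree = 0 := by
      simp only [SimpleGraph.maxDegree, Finset.univ_eq_empty, Finset.image_empty,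
        Finset.max_empty]
      rfl
    rw [h3]
    omega
  · obtain ⟨v, hv⟩ := G.exists_maximal_degree_vertex
    have h1 : sdiffSet G ({v} : Finset V) ≤ sdiff G :=
      Finset.le_sup' _ (Finset.mem_powerset.mpr (Finset.subset_univ _))
    have hext : extNbhd G {v} = G.neighborFinset v := by
      ext u
      simp only [extNbhd, mem_filter, mem_univ, true_and, Finset.mem_singleton,
        SimpleGraph.mem_neighborFinset]
      constructor
      · rintro ⟨-, w, rfl, hadj⟩; exact hadj.symm
      · intro h; exact ⟨fun he => G.loopless.irrefl v (he ▸ h), v, rfl, h.symm⟩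
    have hwle : (weak G ({v} : Finset V)).card ≤ 1 := by
      calc (weak G ({v} : Finset V)).card ≤ ({v} : Finset V).card :=
            Finset.card_le_card (Finset.filter_subset _ _)
        _ = 1 := Finset.card_singleton v
    have h2 : (G.maxDegree : ℤ) - 1 ≤ sdiffSet G ({v} : Finset V) := by
      rw [sdiffSet, hext]
      have : (G.neighborFinset v).card = G.maxDegree := by
        rw [hv]; rfl
      rw [this]
      omega
    omega

theorem stmt_15 {V : Type*} [Fintype V] [DecidableEq V] (G : SimpleGraph V)
    [DecidableRel G.Adj] :
    (G.maxDegree : ℤ) - 1 ≤ sdiff G ∧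
      ((G.maxDegree : ℤ) + 2) * sdiff G ≤ (Fintype.card V : ℤ) * G.maxDegree := by
  refine ⟨key_lower G, ?_⟩
  obtain ⟨D, -, hD⟩ := Finset.exists_mem_eq_sup'
    (⟨∅, empty_mem_powerset _⟩ : ((univ : Finset V).powerset).Nonempty) (sdiffSet G)
  rw [sdiff, hD]
  exact key_upper G D

end StrongDifferential
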